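/- For k ≥ 2 even, the partition λ = 1^k (k parts all equal to 1) satisfies |λ^{⊥B}| > |μ^{⊥B}| for every partition μ with k parts that are not all equal. For k ≥ 5 odd, the partition λ = 2·1^{k−1} (one part equal to 2 and k−1 parts equal to 1) satisfies |λ^{⊥B}| ≥ |μ^{⊥B}| for every partition μ with k parts. -/

import Mathlib

open scoped BigOperators Classical


open Finset Finset.Colex
open scoped FinsetFamily

namespace P2834Aux



/-- binomial coefficients increase up to the middle -/
lemma choose_mono_half {n a b : ℕ} (hab : a ≤ b) (hb : 2 * b ≤ n) :
    n.choose a ≤ n.choose b := by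
  induction b with
  | zero => simpa [Nat.le_zero.1 hab]
  | succ b ih =>
    rcases Nat.lt_or_ge a (b+1) with h | h
    · have h1 : n.choose a ≤ n.choose b := ih (Nat.lt_succ_iff.1 h) (by omega)
      refine h1.trans ?_
      have key : n.choose (b+1) * (b+1) = n.choose b * (n - b) := Nat.choose_succ_right_eq n b
      have hb1 : b + 1 ≤ n - b := by omega
      nlinarith [Nat.choose_pos (show b ≤ n by omega), Nat.choose_pos (show b+1 ≤ n by omega)]
    · have : a = b + 1 := le_antisymm hab h
      simp [this]

lemma choose_strict_half {n a b : ℕ} (hab : a < b) (hb : 2 * b ≤ n) :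
    n.choose a < n.choose b := by
  have h1 : n.choose a ≤ n.choose (b-1) := choose_mono_half (by omega) (by omega)
  refine h1.trans_lt ?_
  have hb' : b - 1 + 1 = b := by omega
  have key : n.choose (b-1+1) * (b-1+1) = n.choose (b-1) * (n - (b-1)) :=
    Nat.choose_succ_right_eq n (b-1)
  rw [hb'] at key
  have h2 : b < n - (b-1) := by omega
  have h3 : 0 < n.choose (b-1) := Nat.choose_pos (by omega)
  have h4 : 0 < b := by omega
  nlinarith

/-- for even n, the middle binomial coefficient is the strict max -/
lemma choose_lt_middle_of_ne {k r : ℕ} (hk : Even k) (hr : r ≤ k) (hne : r ≠ k / 2) :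
    k.choose r < k.choose (k / 2) := by
  obtain ⟨t, rfl⟩ := hk
  have ht : (t + t) / 2 = t := by omega
  rw [ht]
  rcases Nat.lt_or_ge r t with h | h
  · exact choose_strict_half h (by omega)
  · rw [← Nat.choose_symm hr]
    exact choose_strict_half (by omega) (by omega)

lemma choose_le_of_ge_half {n a h : ℕ} (hah : h ≤ a) (han : a ≤ n) (hh : n ≤ 2 * h) :
    n.choose a ≤ n.choose h := by
  rcases le_or_gt a h with h' | h'
  · have : a = h := le_antisymm h' hah
    simp [this]
  · calc n.choose a = n.choose (n - a) := (Nat.choose_symm han).symm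
      _ ≤ n.choose (n - h) := choose_mono_half (by omega) (by omega)
      _ = n.choose h := Nat.choose_symm (by omega)




variable {α : Type*} [Fintype α] [DecidableEq α]

lemma slice_nonempty_le_card {𝒜 : Finset (Finset α)} {r : ℕ} (h : (𝒜 # r).Nonempty) :
    r ≤ Fintype.card α := by
  obtain ⟨A, hA⟩ := h
  rw [Finset.mem_slice] at hA
  rw [← hA.2]
  simpa using Finset.card_le_univ A

lemma sum_card_slice_range {𝒜 : Finset (Finset α)} :
    ∑ r ∈ Finset.range (Fintype.card α + 1), #(𝒜 # r) = #𝒜 := by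
  rw [← Finset.sum_card_slice (𝒜 := 𝒜)]
  apply Finset.sum_congr _ (fun _ _ => rfl)
  ext x
  simp [Nat.lt_succ_iff]

lemma antichain_card_le_slices {𝒜 : Finset (Finset α)}
    (h𝒜 : IsAntichain (· ⊆ ·) (𝒜 : Set (Finset α))) {c : ℕ}
    (H : ∀ r, (𝒜 # r).Nonempty → (Fintype.card α).choose r ≤ c) : #𝒜 ≤ c := by
  set n := Fintype.card α
  have lym := Finset.sum_card_slice_div_choose_le_one (𝕜 := ℚ) h𝒜
  have key : (#𝒜 : ℚ) ≤ c := by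
    rw [← sum_card_slice_range (𝒜 := 𝒜)]
    push_cast
    calc ∑ r ∈ Finset.range (n + 1), (#(𝒜 # r) : ℚ)
        ≤ ∑ r ∈ Finset.range (n + 1), (#(𝒜 # r) : ℚ) / (n.choose r) * c := by
          refine Finset.sum_le_sum fun r _ => ?_
          rcases Finset.eq_empty_or_nonempty (𝒜 # r) with he | hne
          · simp [he]
          · have hr : r ≤ n := slice_nonempty_le_card hne
            have hpos : (0:ℚ) < n.choose r := by exact_mod_cast Nat.choose_pos hr
            rw [div_mul_eq_mul_div, le_div_iff₀ hpos]
            have := H r hne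
            have h1 : (n.choose r : ℚ) ≤ c := by exact_mod_cast this
            have h2 : (0:ℚ) ≤ #(𝒜 # r) := by positivity
            nlinarith
      _ = (∑ r ∈ Finset.range (n + 1), (#(𝒜 # r) : ℚ) / (n.choose r)) * c := by
          rw [Finset.sum_mul]
      _ ≤ 1 * c := by
          refine mul_le_mul_of_nonneg_right lym (by positivity)
      _ = c := one_mul _
  exact_mod_cast key

lemma antichain_card_lt_slices {𝒜 : Finset (Finset α)}
    (h𝒜 : IsAntichain (· ⊆ ·) (𝒜 : Set (Finset α))) {c : ℕ}
    (H : ∀ r, (𝒜 # r).Nonempty → (Fintype.card α).choose r ≤ c)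
    {r₀ : ℕ} (hr₀ : (𝒜 # r₀).Nonempty) (hstrict : (Fintype.card α).choose r₀ < c) :
    #𝒜 < c := by
  set n := Fintype.card α
  have lym := Finset.sum_card_slice_div_choose_le_one (𝕜 := ℚ) h𝒜
  have hr₀n : r₀ ≤ n := slice_nonempty_le_card hr₀
  have hr₀mem : r₀ ∈ Finset.range (n+1) := Finset.mem_range.2 (by omega)
  have key : (#𝒜 : ℚ) < c := by
    rw [← sum_card_slice_range (𝒜 := 𝒜)]
    push_cast
    calc ∑ r ∈ Finset.range (n + 1), (#(𝒜 # r) : ℚ)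
        < ∑ r ∈ Finset.range (n + 1), (#(𝒜 # r) : ℚ) / (n.choose r) * c := by
          refine Finset.sum_lt_sum (fun r _ => ?_) ⟨r₀, hr₀mem, ?_⟩
          · rcases Finset.eq_empty_or_nonempty (𝒜 # r) with he | hne
            · simp [he]
            · have hr : r ≤ n := slice_nonempty_le_card hne
              have hpos : (0:ℚ) < n.choose r := by exact_mod_cast Nat.choose_pos hr
              rw [div_mul_eq_mul_div, le_div_iff₀ hpos]
              have h1 : (n.choose r : ℚ) ≤ c := by exact_mod_cast H r hne
              have h2 : (0:ℚ) ≤ #(𝒜 # r) := by positivity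
              nlinarith
          · have hpos : (0:ℚ) < n.choose r₀ := by exact_mod_cast Nat.choose_pos hr₀n
            rw [div_mul_eq_mul_div, lt_div_iff₀ hpos]
            have h1 : (n.choose r₀ : ℚ) < c := by exact_mod_cast hstrict
            have h2 : (0:ℚ) < #(𝒜 # r₀) := by
              exact_mod_cast Finset.card_pos.2 hr₀
            nlinarith
      _ = (∑ r ∈ Finset.range (n + 1), (#(𝒜 # r) : ℚ) / (n.choose r)) * c := by
          rw [Finset.sum_mul]
      _ ≤ 1 * c := by
          have hc : (0:ℚ) ≤ c := by positivity
          exact mul_le_mul_of_nonneg_right lym hc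
      _ = c := one_mul _
  exact_mod_cast key




/-- There is an initial segment of colex of any given size. -/
lemma exists_isInitSeg_card {n r s : ℕ}
    (hs : s ≤ #(Finset.powersetCard r (Finset.univ : Finset (Fin n)))) :
    ∃ 𝒞 : Finset (Finset (Fin n)), IsInitSeg 𝒞 r ∧ #𝒞 = s := by
  classical
  set P := Finset.powersetCard r (Finset.univ : Finset (Fin n)) with hP
  set T : Finset (Colex (Finset (Fin n))) := P.image toColex with hT
  have hTcard : #T = #P := Finset.card_image_of_injective _ toColex.injective
  have hsN : s ≤ #T := by omega
  set oi := T.orderIsoOfFin rfl with hoi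
  set D : Finset (Fin #T) := (Finset.range s).attachFin
    (fun m hm => lt_of_lt_of_le (Finset.mem_range.1 hm) hsN) with hD
  have hmemD : ∀ j : Fin #T, j ∈ D ↔ (j : ℕ) < s := by
    intro j
    rw [hD, Finset.mem_attachFin, Finset.mem_range]
  refine ⟨D.image (fun i => ofColex (oi i : Colex (Finset (Fin n)))), ⟨?_, ?_⟩, ?_⟩
  · -- sized
    intro A hA
    simp only [Finset.coe_image, Set.mem_image, Finset.mem_coe] at hA
    obtain ⟨i, _, rfl⟩ := hA
    have hmem : (oi i : Colex (Finset (Fin n))) ∈ P.image toColex := (oi i).2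
    obtain ⟨B, hB, hBe⟩ := Finset.mem_image.1 hmem
    have hBe2 : ofColex ((oi i : Colex (Finset (Fin n)))) = B :=
      (congrArg ofColex hBe).symm
    rw [hBe2]
    exact Finset.mem_powersetCard_univ.1 hB
  · -- downward closed
    intro A t hA ht
    obtain ⟨hlt, htr⟩ := ht
    obtain ⟨i, hi, rfl⟩ := Finset.mem_image.1 hA
    have htT : toColex t ∈ T :=
      Finset.mem_image_of_mem _ (Finset.mem_powersetCard_univ.2 htr)
    set j := oi.symm ⟨toColex t, htT⟩ with hj
    have hval : (oi j : Colex (Finset (Fin n))) = toColex t := by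
      rw [hj, OrderIso.apply_symm_apply]
    have hji : j < i := by
      rw [← oi.lt_iff_lt, ← Subtype.coe_lt_coe, hval]
      have : toColex t < toColex (ofColex (oi i : Colex (Finset (Fin n)))) := hlt
      simpa using this
    have hjD : j ∈ D := by
      rw [hmemD]
      have hiD := (hmemD i).1 hi
      exact lt_trans hji hiD
    refine Finset.mem_image.2 ⟨j, hjD, ?_⟩
    rw [hval]
    rfl
  · -- cardinality
    rw [Finset.card_image_of_injOn, hD, Finset.card_attachFin, Finset.card_range]
    intro i _ i' _ h
    exact oi.injective (Subtype.val_injective (ofColex.injective h))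

/-- Members of a small initial segment avoid the top element. -/
lemma isInitSeg_avoid_top {n r : ℕ} (hn : 0 < n) {𝒞 : Finset (Finset (Fin n))}
    (h : IsInitSeg 𝒞 r) (hcard : #𝒞 ≤ (n-1).choose r) :
    ∀ A ∈ 𝒞, (⟨n-1, by omega⟩ : Fin n) ∉ A := by
  set top : Fin n := ⟨n-1, by omega⟩ with htop
  classical
  intro A hA hlastA
  set P := Finset.powersetCard r ((Finset.univ : Finset (Fin n)).erase top) with hPdef
  have hPsub : P ⊆ 𝒞 := by
    intro B hB
    rw [hPdef, Finset.mem_powersetCard] at hB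
    obtain ⟨hBsub, hBcard⟩ := hB
    have hlastB : top ∉ B := fun hm => (Finset.mem_erase.1 (hBsub hm)).1 rfl
    refine h.2 hA ⟨?_, hBcard⟩
    rw [toColex_lt_toColex_iff_exists_forall_lt]
    refine ⟨top, hlastA, hlastB, fun b hb _ => ?_⟩
    have hbne : b ≠ top := fun hbe => hlastB (hbe ▸ hb)
    have hble : b ≤ top := by
      rw [Fin.le_def]
      have := b.isLt
      simp only [htop]
      omega
    exact lt_of_le_of_ne hble hbne
  have hAP : A ∉ P := by
    rw [hPdef, Finset.mem_powersetCard]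
    rintro ⟨hAsub, -⟩
    exact (Finset.mem_erase.1 (hAsub hlastA)).1 rfl
  have h1 : #P + 1 ≤ #𝒞 := by
    have : insert A P ⊆ 𝒞 := Finset.insert_subset hA hPsub
    have h2 := Finset.card_le_card this
    rwa [Finset.card_insert_of_notMem hAP] at h2
  have hPcard : #P = (n-1).choose r := by
    rw [hPdef, Finset.card_powersetCard, Finset.card_erase_of_mem (Finset.mem_univ _)]
    simp
  omega

/-- Relative local LYM: a sized family avoiding the top element at level at least half
has a shadow at least as large. -/
lemma card_le_card_shadow_of_avoid_top {n r : ℕ} (hn : 0 < n) (hr : 0 < r) (h2r : n ≤ 2 * r)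
    {𝒞 : Finset (Finset (Fin n))} (hsized : (𝒞 : Set (Finset (Fin n))).Sized r)
    (havoid : ∀ A ∈ 𝒞, (⟨n-1, by omega⟩ : Fin n) ∉ A) : #𝒞 ≤ #(∂ 𝒞) := by
  classical
  set top : Fin n := ⟨n-1, by omega⟩ with htop
  have key : #𝒞 * r ≤ #(∂ 𝒞) * (n - r) := by
    refine Finset.card_mul_le_card_mul' (r := (· ⊆ ·)) ?_ ?_
    · -- ∀ B ∈ 𝒞, r ≤ #{a ∈ ∂𝒞 | a ⊆ B}
      intro B hB
      rw [← hsized hB, ← Finset.card_image_of_injOn B.erase_injOn]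
      refine Finset.card_le_card ?_
      simp_rw [Finset.image_subset_iff, Finset.mem_bipartiteBelow]
      exact fun a ha => ⟨Finset.erase_mem_shadow hB ha, Finset.erase_subset _ _⟩
    · -- ∀ a ∈ ∂𝒞, #{B ∈ 𝒞 | a ⊆ B} ≤ m + 1 - r
      intro a ha
      have hacard : #a = r - 1 := hsized.shadow ha
      have halast : top ∉ a := by
        rw [Finset.mem_shadow_iff] at ha
        obtain ⟨B, hB, x, hx, rfl⟩ := ha
        exact fun hmem => havoid B hB (Finset.mem_of_mem_erase hmem)
      have hstep : ∀ B ∈ 𝒞.bipartiteAbove (· ⊆ ·) a, ∃ u, B \ a = {u} := by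
        intro B hB
        rw [Finset.mem_bipartiteAbove] at hB
        obtain ⟨hB𝒞, hsub⟩ := hB
        have : #(B \ a) = 1 := by
          rw [Finset.card_sdiff_of_subset hsub, hsized hB𝒞, hacard]
          omega
        exact Finset.card_eq_one.1 this
      have hinj : ∀ B ∈ 𝒞.bipartiteAbove (· ⊆ ·) a,
          (if h : (B \ a).Nonempty then (B \ a).min' h else top) ∈
            Finset.univ \ insert top a := by
        intro B hB
        obtain ⟨u, hu⟩ := hstep B hB
        have hne : (B \ a).Nonempty := by rw [hu]; exact Finset.singleton_nonempty u
        rw [dif_pos hne]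
        have hmem : (B \ a).min' hne ∈ B \ a := Finset.min'_mem _ _
        rw [Finset.mem_sdiff] at hmem
        rw [Finset.mem_sdiff, Finset.mem_insert]
        refine ⟨Finset.mem_univ _, ?_⟩
        rintro (h1 | h2)
        · rw [Finset.mem_bipartiteAbove] at hB
          exact havoid B hB.1 (h1 ▸ hmem.1)
        · exact hmem.2 h2
      calc #(𝒞.bipartiteAbove (· ⊆ ·) a)
          ≤ #(Finset.univ \ insert top a) := by
            refine Finset.card_le_card_of_injOn _ hinj ?_
            intro B hB B' hB' heq
            rw [Finset.mem_coe] at hB hB'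
            dsimp only at heq
            obtain ⟨u, hu⟩ := hstep B hB
            obtain ⟨u', hu'⟩ := hstep B' hB'
            have hne : (B \ a).Nonempty := by rw [hu]; exact Finset.singleton_nonempty u
            have hne' : (B' \ a).Nonempty := by rw [hu']; exact Finset.singleton_nonempty u'
            rw [dif_pos hne, dif_pos hne'] at heq
            have h1 : (B \ a).min' hne = u := by simp [hu]
            have h2 : (B' \ a).min' hne' = u' := by simp [hu']
            rw [Finset.mem_bipartiteAbove] at hB hB'
            have hBu : B = a ∪ (B \ a) := by rw [Finset.union_sdiff_of_subset hB.2]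
            have hBu' : B' = a ∪ (B' \ a) := by rw [Finset.union_sdiff_of_subset hB'.2]
            rw [hBu, hBu', hu, hu', ← h1, ← h2, heq]
      _ = n - r := by
            rw [Finset.card_sdiff_of_subset (Finset.subset_univ _),
              Finset.card_insert_of_notMem halast, hacard]
            simp only [Finset.card_univ, Fintype.card_fin]
            omega
  have h2 : #𝒞 * r ≤ #(∂ 𝒞) * r :=
    key.trans (Nat.mul_le_mul_left _ (by omega))
  exact Nat.le_of_mul_le_mul_right h2 hr

/-- A sized family at level `r ≥ (m+1)/2` of size at most `m.choose r` has a shadow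
at least as large (via Kruskal-Katona). -/
lemma card_le_card_shadow_of_small {n r : ℕ} (hn : 0 < n) (hr : 0 < r) (h2r : n ≤ 2 * r)
    {𝒢 : Finset (Finset (Fin n))} (hsized : (𝒢 : Set (Finset (Fin n))).Sized r)
    (hsmall : #𝒢 ≤ (n-1).choose r) : #𝒢 ≤ #(∂ 𝒢) := by
  classical
  have hle : #𝒢 ≤ #(Finset.powersetCard r (Finset.univ : Finset (Fin n))) := by
    rw [Finset.card_powersetCard]
    simp only [Finset.card_univ, Fintype.card_fin]
    exact hsmall.trans (Nat.choose_le_choose r (by omega))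
  obtain ⟨𝒞, h𝒞init, h𝒞card⟩ := exists_isInitSeg_card hle
  have hkk0 := Finset.kruskal_katona (n := n) hsized (le_of_eq h𝒞card) h𝒞init
  have hkk : #(∂ 𝒞) ≤ #(∂ 𝒢) := by
    convert hkk0 using 3
  have havoid : ∀ A ∈ 𝒞, (⟨n-1, by omega⟩ : Fin n) ∉ A :=
    isInitSeg_avoid_top hn h𝒞init (h𝒞card ▸ hsmall)
  have h1 : #𝒞 ≤ #(∂ 𝒞) := card_le_card_shadow_of_avoid_top hn hr h2r h𝒞init.1 havoid
  omega

/-- Upward local LYM consequence: below half level the upper shadow is at least as large. -/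
lemma card_le_card_upShadow_of_low {n ℓ : ℕ} {ℱ : Finset (Finset (Fin n))}
    (hl : 2 * ℓ < n) (hsized : (ℱ : Set (Finset (Fin n))).Sized ℓ) :
    #ℱ ≤ #(∂⁺ ℱ) := by
  classical
  have hsizedc : (ℱᶜˢ : Set (Finset (Fin n))).Sized (n - ℓ) := by
    simpa using hsized.compls
  have h1 := Finset.card_mul_le_card_shadow_mul hsizedc
  rw [Finset.shadow_compls, Finset.card_compls, Finset.card_compls] at h1
  simp only [Fintype.card_fin] at h1
  have h2 : n - (n - ℓ) + 1 = ℓ + 1 := by omega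
  rw [h2] at h1
  have h3 : #ℱ * (ℓ + 1) ≤ #ℱ * (n - ℓ) := Nat.mul_le_mul_left _ (by omega)
  have h4 : #ℱ * (ℓ + 1) ≤ #(∂⁺ ℱ) * (ℓ + 1) := h3.trans h1
  exact Nat.le_of_mul_le_mul_right h4 (by omega)

/-- At exactly half level, a complement-free family has an upper shadow at least as large. -/
lemma card_le_card_upShadow_half {n r : ℕ} (hr : 0 < r) (hn : n = 2 * r)
    {ℱ : Finset (Finset (Fin n))} (hsized : (ℱ : Set (Finset (Fin n))).Sized r)
    (hcompl : ∀ S ∈ ℱ, Sᶜ ∉ ℱ) : #ℱ ≤ #(∂⁺ ℱ) := by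
  classical
  have hdisj : Disjoint ℱ (ℱᶜˢ) := by
    rw [Finset.disjoint_left]
    intro S hS hS'
    rw [Finset.mem_compls] at hS'
    have := hcompl _ hS'
    rw [compl_compl] at this
    exact this hS
  have hsub : ℱ ∪ ℱᶜˢ ⊆ Finset.powersetCard r (Finset.univ : Finset (Fin n)) := by
    intro S hS
    rw [Finset.mem_union] at hS
    rw [Finset.mem_powersetCard_univ]
    rcases hS with hS | hS
    · exact hsized hS
    · rw [Finset.mem_compls] at hS
      have h1 : #(Sᶜ) = r := hsized hS
      have h2 : #(Sᶜ) = n - #S := by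
        rw [Finset.card_compl]
        simp
      have := Finset.card_le_univ S
      simp only [Finset.card_univ, Fintype.card_fin] at this
      omega
  have hcard2 : #ℱ + #ℱ ≤ n.choose r := by
    have h1 := Finset.card_le_card hsub
    rw [Finset.card_union_of_disjoint hdisj, Finset.card_compls,
      Finset.card_powersetCard] at h1
    simpa using h1
  have hpascal : n.choose r = (n-1).choose (r-1) + (n-1).choose r := by
    have h1 : n = (n-1) + 1 := by omega
    have h2 : r = (r-1) + 1 := by omega
    calc n.choose r = ((n-1)+1).choose ((r-1)+1) := by rw [← h1, ← h2]
      _ = (n-1).choose (r-1) + (n-1).choose ((r-1)+1) := Nat.choose_succ_succ _ _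
      _ = (n-1).choose (r-1) + (n-1).choose r := by rw [← h2]
  have hsymm : (n-1).choose (r-1) = (n-1).choose r := by
    have : (n-1) - r = r - 1 := by omega
    rw [← this, Nat.choose_symm (by omega)]
  have hbound : #ℱ ≤ (n-1).choose r := by omega
  have hsizedc : (ℱᶜˢ : Set (Finset (Fin n))).Sized r := by
    have : (ℱᶜˢ : Set (Finset (Fin n))).Sized (n - r) := by simpa using hsized.compls
    have hnr : n - r = r := by omega
    rwa [hnr] at this
  have hsmall : #(ℱᶜˢ) ≤ (n-1).choose r := by
    rwa [Finset.card_compls]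
  have h := card_le_card_shadow_of_small (by omega) hr (by omega) hsizedc hsmall
  rw [Finset.shadow_compls, Finset.card_compls, Finset.card_compls] at h
  exact h

lemma milner_aux {n t : ℕ} (ht : 0 < t) (hn : n = 2 * t) :
    ∀ d : ℕ, ∀ 𝒜 : Finset (Finset (Fin n)),
      IsAntichain (· ⊆ ·) (𝒜 : Set (Finset (Fin n))) →
      (∀ S ∈ 𝒜, ∀ T ∈ 𝒜, ¬ Disjoint S T) →
      (∀ A ∈ 𝒜, t + 1 ≤ #A + d) → #𝒜 ≤ n.choose (t+1) := by
  intro d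
  induction d with
  | zero =>
    intro 𝒜 anti inter hsize
    refine antichain_card_le_slices anti ?_
    intro r hne
    obtain ⟨A, hA⟩ := hne
    rw [Finset.mem_slice] at hA
    have h0 := hsize A hA.1
    rw [hA.2] at h0
    have h2 : r ≤ n := by
      have := Finset.card_le_univ A
      rw [hA.2] at this
      simpa using this
    rw [Fintype.card_fin]
    exact choose_le_of_ge_half (by omega) h2 (by omega)
  | succ d ih =>
    intro 𝒜 anti inter hsize
    have hnonempty : ∀ A ∈ 𝒜, A.Nonempty := by
      intro A hA
      rcases Finset.eq_empty_or_nonempty A with rfl | h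
      · exact absurd (Finset.disjoint_empty_left ∅) (inter ∅ hA ∅ hA)
      · exact h
    rcases Nat.lt_or_ge d t with hdt | hdt
    swap
    · refine ih 𝒜 anti inter ?_
      intro A hA
      have := (hnonempty A hA).card_pos
      omega
    set ℓ := t - d with hℓ
    set ℱ := 𝒜 # ℓ with hℱ
    have hℱsub : ℱ ⊆ 𝒜 := Finset.slice_subset
    have hℱsized : (ℱ : Set (Finset (Fin n))).Sized ℓ := Finset.sized_slice
    have hup : #ℱ ≤ #(∂⁺ ℱ) := by
      rcases Nat.eq_zero_or_pos d with rfl | hd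
      · have hℓt : ℓ = t := by omega
        rw [hℓt] at hℱsized
        refine card_le_card_upShadow_half (by omega) hn hℱsized ?_
        intro S hS hSc
        exact inter S (hℱsub hS) Sᶜ (hℱsub hSc) disjoint_compl_right
      · exact card_le_card_upShadow_of_low (by omega) hℱsized
    obtain ⟨G, hGsub, hGcard⟩ := Finset.exists_subset_card_eq hup
    have hGprop : ∀ U ∈ G, (∃ S ∈ ℱ, S ⊆ U) ∧ #U = ℓ + 1 ∧ U ∉ 𝒜 := by
      intro U hU
      have hU' := hGsub hU
      rw [Finset.mem_upShadow_iff] at hU'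
      obtain ⟨S, hS, a, haS, rfl⟩ := hU'
      have hScard : #S = ℓ := hℱsized hS
      have hcard : #(insert a S) = ℓ + 1 := by
        rw [Finset.card_insert_of_notMem haS, hScard]
      refine ⟨⟨S, hS, Finset.subset_insert _ _⟩, hcard, ?_⟩
      intro hmem
      refine anti (Finset.mem_coe.2 (hℱsub hS)) (Finset.mem_coe.2 hmem) ?_
        (Finset.subset_insert _ _)
      intro h
      have hmm := Finset.mem_insert_self a S
      rw [← h] at hmm
      exact haS hmm
    set 𝒜' := (𝒜 \ ℱ) ∪ G with h𝒜'
    have hdisj : Disjoint (𝒜 \ ℱ) G := by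
      rw [Finset.disjoint_right]
      intro U hU hU2
      exact (hGprop U hU).2.2 (Finset.mem_sdiff.1 hU2).1
    have hcard' : #𝒜' = #𝒜 := by
      rw [h𝒜', Finset.card_union_of_disjoint hdisj, Finset.card_sdiff_of_subset hℱsub, hGcard]
      have := Finset.card_le_card hℱsub
      omega
    have hsizes' : ∀ A ∈ 𝒜', t + 1 ≤ #A + d := by
      intro A hA
      rw [h𝒜', Finset.mem_union] at hA
      rcases hA with hA | hA
      · rw [Finset.mem_sdiff] at hA
        have h1 := hsize A hA.1
        have h2 : #A ≠ ℓ := fun h => hA.2 (Finset.mem_slice.2 ⟨hA.1, h⟩)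
        omega
      · have := (hGprop A hA).2.1
        omega
    have hmem' : ∀ A ∈ 𝒜', ∃ S ∈ 𝒜, S ⊆ A := by
      intro A hA
      rw [h𝒜', Finset.mem_union] at hA
      rcases hA with hA | hA
      · exact ⟨A, (Finset.mem_sdiff.1 hA).1, Finset.Subset.refl _⟩
      · obtain ⟨S, hS, hsub⟩ := (hGprop A hA).1
        exact ⟨S, hℱsub hS, hsub⟩
    have hinter' : ∀ S ∈ 𝒜', ∀ T ∈ 𝒜', ¬ Disjoint S T := by
      intro S hS T hT hdisjST
      obtain ⟨S₀, hS₀, hS₀sub⟩ := hmem' S hS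
      obtain ⟨T₀, hT₀, hT₀sub⟩ := hmem' T hT
      exact inter S₀ hS₀ T₀ hT₀ (hdisjST.mono hS₀sub hT₀sub)
    have hanti' : IsAntichain (· ⊆ ·) (𝒜' : Set (Finset (Fin n))) := by
      intro A hA B hB hAB hsub
      rw [Finset.mem_coe, h𝒜', Finset.mem_union] at hA hB
      rcases hA with hA | hA <;> rcases hB with hB | hB
      · exact anti (Finset.mem_coe.2 (Finset.mem_sdiff.1 hA).1)
          (Finset.mem_coe.2 (Finset.mem_sdiff.1 hB).1) hAB hsub
      · obtain ⟨-, hBcard, -⟩ := hGprop B hB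
        rw [Finset.mem_sdiff] at hA
        have h1 := hsize A hA.1
        have h2 : #A ≠ ℓ := fun h => hA.2 (Finset.mem_slice.2 ⟨hA.1, h⟩)
        exact hAB (Finset.eq_of_subset_of_card_le hsub (by omega))
      · obtain ⟨⟨S, hS, hSsub⟩, hAcard, -⟩ := hGprop A hA
        rw [Finset.mem_sdiff] at hB
        have hSB : S ⊆ B := hSsub.trans hsub
        have hSne : S ≠ B := fun h => hB.2 (h ▸ hS)
        exact anti (Finset.mem_coe.2 (hℱsub hS)) (Finset.mem_coe.2 hB.1) hSne hSB
      · obtain ⟨-, hAcard, -⟩ := hGprop A hA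
        obtain ⟨-, hBcard, -⟩ := hGprop B hB
        exact hAB (Finset.eq_of_subset_of_card_le hsub (by omega))
    have hfin := ih 𝒜' hanti' hinter' hsizes'
    omega

/-- Milner's theorem (even ground set): an intersecting antichain on a ground set of size `2t`
has at most `(2t).choose (t+1)` members. -/
lemma milner_general {β : Type*} [Fintype β] [DecidableEq β] {t : ℕ} (ht : 0 < t)
    (hcard : Fintype.card β = 2 * t) {𝒜 : Finset (Finset β)}
    (anti : IsAntichain (· ⊆ ·) (𝒜 : Set (Finset β)))
    (inter : ∀ S ∈ 𝒜, ∀ T ∈ 𝒜, ¬ Disjoint S T) :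
    #𝒜 ≤ (2*t).choose (t+1) := by
  classical
  set e : β ≃ Fin (2*t) := Fintype.equivFinOfCardEq hcard with he
  set Φ : Finset β → Finset (Fin (2*t)) := fun S => S.map e.toEmbedding with hΦ
  have hΦinj : Function.Injective Φ := fun S T h => Finset.map_injective _ h
  set 𝒜' := 𝒜.image Φ with h𝒜'
  have hcard' : #𝒜' = #𝒜 := Finset.card_image_of_injective _ hΦinj
  have hanti' : IsAntichain (· ⊆ ·) (𝒜' : Set (Finset (Fin (2*t)))) := by
    intro A hA B hB hAB hsub
    rw [Finset.mem_coe, h𝒜', Finset.mem_image] at hA hB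
    obtain ⟨A₀, hA₀, rfl⟩ := hA
    obtain ⟨B₀, hB₀, rfl⟩ := hB
    rw [hΦ] at hsub
    simp only at hsub
    rw [Finset.map_subset_map] at hsub
    exact anti (Finset.mem_coe.2 hA₀) (Finset.mem_coe.2 hB₀)
      (fun h => hAB (by rw [h])) hsub
  have hinter' : ∀ S ∈ 𝒜', ∀ T ∈ 𝒜', ¬ Disjoint S T := by
    intro S hS T hT hd
    obtain ⟨S₀, hS₀, rfl⟩ := Finset.mem_image.1 hS
    obtain ⟨T₀, hT₀, rfl⟩ := Finset.mem_image.1 hT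
    rw [hΦ] at hd
    simp only at hd
    rw [Finset.disjoint_map] at hd
    exact inter _ hS₀ _ hT₀ hd
  have hfin := milner_aux ht rfl (t+1) 𝒜' hanti' hinter' (fun A _ => by omega)
  omega


end P2834Aux

namespace P2834

/-- The ±1 value associated to a Boolean. -/
def signVal (b : Bool) : ℤ := if b then 1 else -1

/-- The Bernoulli ±1 matrix built from a Boolean matrix. -/
def bmat {n : ℕ} (B : Fin n → Fin n → Bool) : Matrix (Fin n) (Fin n) ℤ :=
  fun i j => signVal (B i j)

/-- Probability of an event under the uniform distribution on `n × n` ±1 matrices. -/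
noncomputable def Pr (n : ℕ) (E : Matrix (Fin n) (Fin n) ℤ → Prop) : ℝ :=
  (Finset.filter (fun B : Fin n → Fin n → Bool => E (bmat B)) Finset.univ).card / 2 ^ (n * n)

/-- Expectation of a real-valued function of a uniformly random `n × n` ±1 matrix. -/
noncomputable def Ex (n : ℕ) (f : Matrix (Fin n) (Fin n) ℤ → ℝ) : ℝ :=
  (∑ B : Fin n → Fin n → Bool, f (bmat B)) / 2 ^ (n * n)

/-- `lam : Fin k → ℤ` is an integer partition with `k` parts:
nonincreasing, all parts at least 1. -/
def IsPartition {k : ℕ} (lam : Fin k → ℤ) : Prop :=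
  (∀ i j : Fin k, i ≤ j → lam j ≤ lam i) ∧ ∀ i, 1 ≤ lam i

/-- The Bernoulli orthogonal complement of `v`: sign vectors (encoded as Boolean
vectors, `true ↦ +1`, `false ↦ -1`) orthogonal to `v`. -/
def perpB {k : ℕ} (v : Fin k → ℤ) : Finset (Fin k → Bool) :=
  Finset.filter (fun x => ∑ i, v i * signVal (x i) = 0) Finset.univ

/-- `r_λ := |λ^{⊥B}| / 2^k`. -/
def rVal {k : ℕ} (lam : Fin k → ℤ) : ℚ := (perpB lam).card / 2 ^ k

/-- `V_λ`: all vectors obtained by permuting the parts of `λ` and attaching ± signs,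
with the first coordinate positive. -/
def Vlam {k : ℕ} (lam : Fin k → ℤ) : Set (Fin k → ℤ) :=
  {v | (∃ (σ : Equiv.Perm (Fin k)) (ε : Fin k → ℤ),
          (∀ i, ε i = 1 ∨ ε i = -1) ∧ ∀ i, v i = ε i * lam (σ i)) ∧
        ∀ h : 0 < k, 0 < v ⟨0, h⟩}

/-- `V_λ^{(n)}`: vectors of length `n` of template `λ`, obtained from elements of
`V_λ` by inserting `n - k` zero coordinates (via an order-preserving coordinate
injection). -/
def VlamN {k : ℕ} (lam : Fin k → ℤ) (n : ℕ) : Set (Fin n → ℤ) :=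
  {w | ∃ (c : Fin k ↪o Fin n) (u : Fin k → ℤ), u ∈ Vlam lam ∧
        (∀ i, w (c i) = u i) ∧ ∀ j, (∀ i, c i ≠ j) → w j = 0}

/-- `μ` reduces to `λ` (`μ ⇒ λ`): there are a `k`-element subset `I` of the `m`
coordinates (given by an order embedding) and `v ∈ V_λ` with
`Proj_I μ^{⊥B} ⊆ v^{⊥B}`.  (When `k = m` the only order embedding is the identity,
recovering the case `μ^{⊥B} ⊆ v^{⊥B}`.) -/
def Reduces {m k : ℕ} (mu : Fin m → ℤ) (lam : Fin k → ℤ) : Prop :=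
  ∃ (I : Fin k ↪o Fin m) (v : Fin k → ℤ), v ∈ Vlam lam ∧
    ∀ x ∈ perpB mu, (fun i => x (I i)) ∈ perpB v

/-- Equivalence of templates: reduction in both directions. -/
def Equivp {m k : ℕ} (mu : Fin m → ℤ) (lam : Fin k → ℤ) : Prop :=
  Reduces mu lam ∧ Reduces lam mu

/-- Strict reduction: `μ ⇒ λ` but not `λ ⇒ μ`. -/
def StrictReduces {m k : ℕ} (mu : Fin m → ℤ) (lam : Fin k → ℤ) : Prop :=
  Reduces mu lam ∧ ¬ Reduces lam mu

/-- Lexicographic comparison of integer vectors. -/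
def lexLE {k : ℕ} (a b : Fin k → ℤ) : Prop :=
  a = b ∨ ∃ i, (∀ j, j < i → a j = b j) ∧ a i < b i

/-- A partition is novel iff it does not strictly reduce to any partition, and it is
lexicographically first among all partitions equivalent to it. -/
def Novel {k : ℕ} (lam : Fin k → ℤ) : Prop :=
  IsPartition lam ∧
  (∀ (m : ℕ) (mu : Fin m → ℤ), IsPartition mu → ¬ StrictReduces lam mu) ∧
  (∀ mu : Fin k → ℤ, IsPartition mu → Equivp lam mu → lexLE lam mu)

/-- The event that `M` has a right null vector of template `λ`. -/
def Rev {k : ℕ} (lam : Fin k → ℤ) (n : ℕ) (M : Matrix (Fin n) (Fin n) ℤ) : Prop :=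
  ∃ v ∈ VlamN lam n, M.mulVec v = 0

/-- The event that `M` has a left null vector of template `λ`. -/
def Lev {k : ℕ} (lam : Fin k → ℤ) (n : ℕ) (M : Matrix (Fin n) (Fin n) ℤ) : Prop :=
  ∃ v ∈ VlamN lam n, Matrix.vecMul v M = 0

/-- `D_λ := R_λ ∪ L_λ`. -/
def Dev {k : ℕ} (lam : Fin k → ℤ) (n : ℕ) (M : Matrix (Fin n) (Fin n) ℤ) : Prop :=
  Rev lam n M ∨ Lev lam n M

/-- The partition `1^k`. -/
def onesP (k : ℕ) : Fin k → ℤ := fun _ => 1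

/-- The partition `2·1^(k-1)`. -/
def twoOnesP (k : ℕ) : Fin k → ℤ := fun i => if i.val = 0 then 2 else 1



open Finset

/-- support of a sign vector -/
def supp {k : ℕ} (x : Fin k → Bool) : Finset (Fin k) :=
  Finset.univ.filter (fun i => x i = true)

lemma supp_injective {k : ℕ} : Function.Injective (supp (k := k)) := by
  intro x y h
  funext i
  have hx : i ∈ supp x ↔ i ∈ supp y := by rw [h]
  simp only [supp, Finset.mem_filter, Finset.mem_univ, true_and] at hx
  rcases Bool.eq_false_or_eq_true (x i) with h1 | h1 <;>
    rcases Bool.eq_false_or_eq_true (y i) with h2 | h2 <;> simp_all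

lemma mem_perpB_iff_supp {k : ℕ} {v : Fin k → ℤ} {x : Fin k → Bool} :
    x ∈ perpB v ↔ ∑ i ∈ supp x, v i = ∑ i ∈ (supp x)ᶜ, v i := by
  rw [perpB, Finset.mem_filter]
  simp only [Finset.mem_univ, true_and]
  have hcompl : (supp x)ᶜ = Finset.univ.filter (fun i => ¬ (x i = true)) := by
    rw [supp, Finset.compl_filter]
  have hsplit : ∑ i, v i * signVal (x i)
      = ∑ i ∈ supp x, v i * signVal (x i) + ∑ i ∈ (supp x)ᶜ, v i * signVal (x i) := by
    rw [hcompl, supp, Finset.sum_filter_add_sum_filter_not]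
  have h1 : ∑ i ∈ supp x, v i * signVal (x i) = ∑ i ∈ supp x, v i := by
    refine Finset.sum_congr rfl fun i hi => ?_
    rw [supp, Finset.mem_filter] at hi
    rw [hi.2]
    simp [signVal]
  have h2 : ∑ i ∈ (supp x)ᶜ, v i * signVal (x i) = -∑ i ∈ (supp x)ᶜ, v i := by
    rw [← Finset.sum_neg_distrib]
    refine Finset.sum_congr rfl fun i hi => ?_
    rw [hcompl, Finset.mem_filter] at hi
    have : x i = false := by
      rcases Bool.eq_false_or_eq_true (x i) with h | h
      · exact absurd h hi.2
      · exact h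
    rw [this]
    simp [signVal]
  rw [hsplit, h1, h2]
  constructor
  · intro h; omega
  · intro h; omega

/-- the family of supports of elements of `perpB v` -/
def famOf {k : ℕ} (v : Fin k → ℤ) : Finset (Finset (Fin k)) :=
  (perpB v).image supp

lemma card_famOf {k : ℕ} (v : Fin k → ℤ) : #(famOf v) = #(perpB v) :=
  Finset.card_image_of_injective _ supp_injective

lemma mem_famOf {k : ℕ} {v : Fin k → ℤ} {S : Finset (Fin k)} :
    S ∈ famOf v ↔ ∑ i ∈ S, v i = ∑ i ∈ Sᶜ, v i := by
  constructor
  · intro h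
    obtain ⟨x, hx, rfl⟩ := Finset.mem_image.1 h
    exact mem_perpB_iff_supp.1 hx
  · intro h
    refine Finset.mem_image.2 ⟨fun i => decide (i ∈ S), ?_, ?_⟩
    · rw [mem_perpB_iff_supp]
      have hs : supp (fun i => decide (i ∈ S)) = S := by
        ext i; simp [supp]
      rw [hs]
      exact h
    · ext i; simp [supp]

lemma famOf_antichain {k : ℕ} {v : Fin k → ℤ} (hv : ∀ i, 1 ≤ v i) :
    IsAntichain (· ⊆ ·) ((famOf v : Finset (Finset (Fin k))) : Set (Finset (Fin k))) := by
  intro S hS T hT hne hsub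
  rw [Finset.mem_coe, mem_famOf] at hS hT
  have hssub : S ⊂ T := HasSubset.Subset.ssubset_of_ne hsub hne
  obtain ⟨j, hjT, hjS⟩ := Finset.exists_of_ssubset hssub
  have h1 : ∑ i ∈ S, v i < ∑ i ∈ T, v i := by
    refine Finset.sum_lt_sum_of_subset hsub hjT hjS (by linarith [hv j]) ?_
    intro i _ _
    linarith [hv i]
  have h2 : ∑ i ∈ Tᶜ, v i ≤ ∑ i ∈ Sᶜ, v i := by
    refine Finset.sum_le_sum_of_subset_of_nonneg (Finset.compl_subset_compl.2 hsub) ?_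
    intro i _ _
    linarith [hv i]
  omega

lemma famOf_compl_closed {k : ℕ} {v : Fin k → ℤ} {S : Finset (Fin k)}
    (h : S ∈ famOf v) : Sᶜ ∈ famOf v := by
  rw [mem_famOf] at h ⊢
  rw [compl_compl]
  omega

lemma famOf_sum_eq {k : ℕ} {v : Fin k → ℤ} {S : Finset (Fin k)} (h : S ∈ famOf v) :
    2 * ∑ i ∈ S, v i = ∑ i, v i := by
  rw [mem_famOf] at h
  have := Finset.sum_add_sum_compl S v
  omega

lemma onesP_lower {k : ℕ} (hke : Even k) : k.choose (k/2) ≤ #(perpB (onesP k)) := by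
  rw [← card_famOf]
  have hsub : Finset.powersetCard (k/2) (Finset.univ : Finset (Fin k)) ⊆ famOf (onesP k) := by
    intro S hS
    rw [Finset.mem_powersetCard_univ] at hS
    rw [mem_famOf]
    have h3 : #(Sᶜ) = k / 2 := by
      rw [Finset.card_compl]
      simp only [Fintype.card_fin]
      obtain ⟨t, ht⟩ := hke
      omega
    have h1 : ∑ i ∈ S, onesP k i = (#S : ℤ) := by simp [onesP]
    have h2 : ∑ i ∈ Sᶜ, onesP k i = (#(Sᶜ) : ℤ) := by simp [onesP]
    rw [h1, h2, hS, h3]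
  calc k.choose (k/2) = #(Finset.powersetCard (k/2) (Finset.univ : Finset (Fin k))) := by
        rw [Finset.card_powersetCard]
        simp
    _ ≤ #(famOf (onesP k)) := Finset.card_le_card hsub

section TwoOnes

variable {k : ℕ}

lemma twoOnesP_val_z (hk : 0 < k) : twoOnesP k ⟨0, hk⟩ = 2 := by simp [twoOnesP]

lemma sum_twoOnesP_of_not_mem (hk : 0 < k) {S : Finset (Fin k)}
    (hz : (⟨0, hk⟩ : Fin k) ∉ S) : ∑ i ∈ S, twoOnesP k i = (#S : ℤ) := by
  have h1 : ∀ i ∈ S, twoOnesP k i = 1 := by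
    intro i hi
    have : i.val ≠ 0 := by
      intro h
      apply hz
      have : i = ⟨0, hk⟩ := Fin.ext h
      rwa [← this]
    simp [twoOnesP, this]
  rw [Finset.sum_congr rfl h1]
  simp

lemma sum_twoOnesP_of_mem (hk : 0 < k) {S : Finset (Fin k)}
    (hz : (⟨0, hk⟩ : Fin k) ∈ S) : ∑ i ∈ S, twoOnesP k i = 1 + (#S : ℤ) := by
  rw [← Finset.insert_erase hz, Finset.sum_insert (Finset.notMem_erase _ _)]
  rw [sum_twoOnesP_of_not_mem hk (Finset.notMem_erase _ _), twoOnesP_val_z hk,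
    Finset.card_erase_of_mem hz, Finset.card_insert_of_notMem (Finset.notMem_erase _ _),
    Finset.card_erase_of_mem hz]
  have : 1 ≤ #S := Finset.card_pos.2 ⟨_, hz⟩
  push_cast [this]
  ring

lemma twoOnesP_lower (hk : 5 ≤ k) (hko : Odd k) :
    2 * (k-1).choose ((k-3)/2) ≤ #(perpB (twoOnesP k)) := by
  rw [← card_famOf]
  have hk0 : 0 < k := by omega
  obtain ⟨u, hu⟩ := hko
  set z : Fin k := ⟨0, hk0⟩ with hzdef
  set U := (Finset.univ : Finset (Fin k)).erase z with hU
  have hUcard : #U = k - 1 := by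
    rw [hU, Finset.card_erase_of_mem (Finset.mem_univ _)]
    simp
  set B1 := (Finset.powersetCard ((k-3)/2) U).image (insert z) with hB1
  set B2 := Finset.powersetCard ((k+1)/2) U with hB2
  have hzB1 : ∀ S ∈ B1, z ∈ S := by
    intro S hS
    obtain ⟨S₀, _, rfl⟩ := Finset.mem_image.1 hS
    exact Finset.mem_insert_self _ _
  have hzB2 : ∀ S ∈ B2, z ∉ S := by
    intro S hS hzS
    rw [hB2, Finset.mem_powersetCard] at hS
    exact (Finset.mem_erase.1 (hS.1 hzS)).1 rfl
  have hdisj : Disjoint B1 B2 := by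
    rw [Finset.disjoint_left]
    intro S hS1 hS2
    exact hzB2 S hS2 (hzB1 S hS1)
  have hsub1 : B1 ⊆ famOf (twoOnesP k) := by
    intro S hS
    obtain ⟨S₀, hS₀, rfl⟩ := Finset.mem_image.1 hS
    rw [Finset.mem_powersetCard] at hS₀
    have hzS₀ : z ∉ S₀ := fun h => (Finset.mem_erase.1 (hS₀.1 h)).1 rfl
    have hzc : z ∉ (insert z S₀)ᶜ := by simp
    rw [mem_famOf, sum_twoOnesP_of_mem hk0 (Finset.mem_insert_self _ _),
      sum_twoOnesP_of_not_mem hk0 hzc, Finset.card_insert_of_notMem hzS₀,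
      Finset.card_compl, Finset.card_insert_of_notMem hzS₀]
    simp only [Fintype.card_fin]
    rw [hS₀.2]
    rw [show k - ((k-3)/2 + 1) = (k-3)/2 + 2 from by omega]
    push_cast
    ring
  have hsub2 : B2 ⊆ famOf (twoOnesP k) := by
    intro S hS
    rw [hB2, Finset.mem_powersetCard] at hS
    have hzS : z ∉ S := fun h => (Finset.mem_erase.1 (hS.1 h)).1 rfl
    have hzc : z ∈ Sᶜ := Finset.mem_compl.2 hzS
    rw [mem_famOf, sum_twoOnesP_of_not_mem hk0 hzS, sum_twoOnesP_of_mem hk0 hzc,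
      Finset.card_compl, hS.2]
    simp only [Fintype.card_fin]
    rw [show k - (k+1)/2 = (k-1)/2 from by omega,
      show (k+1)/2 = (k-1)/2 + 1 from by omega]
    push_cast
    ring
  have hcard1 : #B1 = (k-1).choose ((k-3)/2) := by
    rw [hB1, Finset.card_image_of_injOn, Finset.card_powersetCard, hUcard]
    intro S hS T hT h
    rw [Finset.mem_coe, Finset.mem_powersetCard] at hS hT
    have hzS : z ∉ S := fun hm => (Finset.mem_erase.1 (hS.1 hm)).1 rfl
    have hzT : z ∉ T := fun hm => (Finset.mem_erase.1 (hT.1 hm)).1 rfl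
    have := congrArg (fun X => Finset.erase X z) h
    simpa [Finset.erase_insert hzS, Finset.erase_insert hzT] using this
  have hcard2 : #B2 = (k-1).choose ((k-3)/2) := by
    rw [hB2, Finset.card_powersetCard, hUcard]
    have h1 : (k-1) - (k+1)/2 = (k-3)/2 := by omega
    rw [← h1, Nat.choose_symm (by omega)]
  have hunion : B1 ∪ B2 ⊆ famOf (twoOnesP k) := Finset.union_subset hsub1 hsub2
  have := Finset.card_le_card hunion
  rw [Finset.card_union_of_disjoint hdisj, hcard1, hcard2] at this
  omega

end TwoOnes

lemma even_bound {k : ℕ} (hk2 : 2 ≤ k) (hke : Even k) {mu : Fin k → ℤ}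
    (hmu : IsPartition mu) (hne : ∃ i j, mu i ≠ mu j) :
    #(perpB mu) < k.choose (k/2) := by
  rw [← card_famOf]
  set 𝒜 := famOf mu with h𝒜
  have anti := famOf_antichain (v := mu) hmu.2
  set z : Fin k := ⟨0, by omega⟩ with hz
  set w : Fin k := ⟨k-1, by omega⟩ with hw
  have hzw : z ≠ w := by
    intro h
    have h2 : (0 : ℕ) = k - 1 := congrArg Fin.val h
    omega
  have hmono := hmu.1
  have hmuzw : mu w < mu z := by
    have h1 : ∀ i, mu i ≤ mu z := fun i => hmono z i (by
      rw [Fin.le_def]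
      exact Nat.zero_le _)
    have h2 : ∀ i, mu w ≤ mu i := fun i => hmono i w (by
      rw [Fin.le_def]
      show (i : ℕ) ≤ k - 1
      have := i.isLt
      omega)
    obtain ⟨i, j, hij⟩ := hne
    rcases lt_or_ge (mu w) (mu z) with h | h
    · exact h
    · exfalso
      have hall : ∀ i, mu i = mu z := fun i =>
        le_antisymm (h1 i) (le_trans h (h2 i))
      exact hij (by rw [hall i, hall j])
  by_cases hsz : ∃ A ∈ 𝒜, #A ≠ k / 2
  · obtain ⟨A, hA, hAne⟩ := hsz
    have hslice : (𝒜 # (#A)).Nonempty := ⟨A, Finset.mem_slice.2 ⟨hA, rfl⟩⟩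
    refine P2834Aux.antichain_card_lt_slices anti ?_ hslice ?_
    · intro r _
      rw [Fintype.card_fin]
      exact Nat.choose_le_middle r k
    · rw [Fintype.card_fin]
      refine P2834Aux.choose_lt_middle_of_ne hke ?_ hAne
      have := Finset.card_le_univ A
      simpa using this
  · push_neg at hsz
    have hsub : 𝒜 ⊆ Finset.powersetCard (k/2) Finset.univ := by
      intro A hA
      rw [Finset.mem_powersetCard_univ]
      exact hsz A hA
    have herasecard : k/2 - 1 ≤ #(((Finset.univ : Finset (Fin k)).erase z).erase w) := by
      rw [Finset.card_erase_of_mem (Finset.mem_erase.2 ⟨hzw.symm, Finset.mem_univ _⟩),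
        Finset.card_erase_of_mem (Finset.mem_univ _)]
      simp only [Finset.card_univ, Fintype.card_fin]
      omega
    obtain ⟨S₁, hS₁sub, hS₁card⟩ := Finset.exists_subset_card_eq herasecard
    have hwS₁ : w ∉ S₁ := fun h => (Finset.mem_erase.1 (hS₁sub h)).1 rfl
    have hzS₁ : z ∉ S₁ := fun h =>
      (Finset.mem_erase.1 (Finset.mem_erase.1 (hS₁sub h)).2).1 rfl
    set S := insert z S₁ with hSdef
    set S' := insert w S₁ with hS'def
    have hScard : #S = k/2 := by
      rw [hSdef, Finset.card_insert_of_notMem hzS₁, hS₁card]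
      omega
    have hS'card : #S' = k/2 := by
      rw [hS'def, Finset.card_insert_of_notMem hwS₁, hS₁card]
      omega
    have hkey : S ∉ 𝒜 ∨ S' ∉ 𝒜 := by
      by_contra hcon
      push_neg at hcon
      have h1 := famOf_sum_eq hcon.1
      have h2 := famOf_sum_eq hcon.2
      rw [hSdef, Finset.sum_insert hzS₁] at h1
      rw [hS'def, Finset.sum_insert hwS₁] at h2
      omega
    have hss : 𝒜 ⊂ Finset.powersetCard (k/2) Finset.univ := by
      rw [Finset.ssubset_iff_of_subset hsub]
      rcases hkey with h | h
      · exact ⟨S, Finset.mem_powersetCard_univ.2 hScard, h⟩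
      · exact ⟨S', Finset.mem_powersetCard_univ.2 hS'card, h⟩
    have hlt := Finset.card_lt_card hss
    rwa [Finset.card_powersetCard, Finset.card_univ, Fintype.card_fin] at hlt

lemma odd_bound {k : ℕ} (hk5 : 5 ≤ k) (hko : Odd k) {mu : Fin k → ℤ}
    (hmu : IsPartition mu) :
    #(perpB mu) ≤ 2 * (k-1).choose ((k-3)/2) := by
  rw [← card_famOf]
  set 𝒜 := famOf mu with h𝒜
  have anti := famOf_antichain (v := mu) hmu.2
  set z : Fin k := ⟨0, by omega⟩ with hz
  set 𝒜₀ := 𝒜.filter (fun S => z ∉ S) with h𝒜₀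
  set 𝒜₁ := 𝒜.filter (fun S => z ∈ S) with h𝒜₁
  have hsplit : #𝒜₁ + #𝒜₀ = #𝒜 := by
    rw [h𝒜₀, h𝒜₁]
    exact Finset.card_filter_add_card_filter_not _
  have hbij : #𝒜₁ = #𝒜₀ := by
    refine Finset.card_bij (fun S _ => Sᶜ) ?_ ?_ ?_
    · intro S hS
      rw [h𝒜₁, Finset.mem_filter] at hS
      rw [h𝒜₀, Finset.mem_filter]
      refine ⟨famOf_compl_closed hS.1, ?_⟩
      simp [hS.2]
    · intro S hS T hT h
      have := congrArg (·ᶜ) h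
      simpa using this
    · intro T hT
      rw [h𝒜₀, Finset.mem_filter] at hT
      refine ⟨Tᶜ, ?_, by simp⟩
      rw [h𝒜₁, Finset.mem_filter]
      exact ⟨famOf_compl_closed hT.1, Finset.mem_compl.2 hT.2⟩
  have hinter : ∀ S ∈ 𝒜₀, ∀ T ∈ 𝒜₀, ¬ Disjoint S T := by
    intro S hS T hT hd
    rw [h𝒜₀, Finset.mem_filter] at hS hT
    have hTc : Tᶜ ∈ 𝒜 := famOf_compl_closed hT.1
    have hsub : S ⊆ Tᶜ := by
      intro i hi
      rw [Finset.mem_compl]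
      exact fun hiT => (Finset.disjoint_left.1 hd) hi hiT
    have hne : S ≠ Tᶜ := by
      intro h
      have hzc : z ∈ Tᶜ := Finset.mem_compl.2 hT.2
      rw [← h] at hzc
      exact hS.2 hzc
    exact anti (Finset.mem_coe.2 hS.1) (Finset.mem_coe.2 hTc) hne hsub
  have anti₀ : IsAntichain (· ⊆ ·) (𝒜₀ : Set (Finset (Fin k))) := by
    refine anti.subset ?_
    intro S hS
    rw [Finset.mem_coe, h𝒜₀, Finset.mem_filter] at hS
    exact Finset.mem_coe.2 hS.1
  -- transfer to Fin (k-1)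
  set f : Fin k → Fin (k-1) := fun i => ⟨i.val - 1, by have := i.isLt; omega⟩ with hf
  set g : Fin (k-1) → Fin k := fun j => ⟨j.val + 1, by have := j.isLt; omega⟩ with hg
  have hgf : ∀ i : Fin k, i ≠ z → g (f i) = i := by
    intro i hi
    have hval : i.val ≠ 0 := by
      intro h
      exact hi (Fin.ext h)
    apply Fin.ext
    simp only [hf, hg]
    omega
  have hback : ∀ S : Finset (Fin k), z ∉ S → (S.image f).image g = S := by
    intro S hzS
    rw [Finset.image_image]
    have : ∀ i ∈ S, (g ∘ f) i = id i := by
      intro i hi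
      have : i ≠ z := fun h => hzS (h ▸ hi)
      simp [Function.comp, hgf i this]
    rw [Finset.image_congr this, Finset.image_id]
  set ℬ := 𝒜₀.image (fun S => S.image f) with hℬ
  have hz₀ : ∀ S ∈ 𝒜₀, z ∉ S := by
    intro S hS
    exact (Finset.mem_filter.1 hS).2
  have hcardℬ : #ℬ = #𝒜₀ := by
    rw [hℬ]
    apply Finset.card_image_of_injOn
    intro S hS T hT h
    rw [Finset.mem_coe] at hS hT
    have := congrArg (fun X => Finset.image g X) h
    simpa [hback S (hz₀ S hS), hback T (hz₀ T hT)] using this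
  have antiℬ : IsAntichain (· ⊆ ·) (ℬ : Set (Finset (Fin (k-1)))) := by
    intro A hA B hB hAB hsubAB
    rw [Finset.mem_coe, hℬ, Finset.mem_image] at hA hB
    obtain ⟨S, hS, rfl⟩ := hA
    obtain ⟨T, hT, rfl⟩ := hB
    have hST : S ⊆ T := by
      have h1 := Finset.image_subset_image (f := g) hsubAB
      rwa [hback S (hz₀ S hS), hback T (hz₀ T hT)] at h1
    exact anti₀ (Finset.mem_coe.2 hS) (Finset.mem_coe.2 hT)
      (fun h => hAB (by rw [h])) hST
  have interℬ : ∀ A ∈ ℬ, ∀ B ∈ ℬ, ¬ Disjoint A B := by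
    intro A hA B hB hd
    rw [hℬ, Finset.mem_image] at hA hB
    obtain ⟨S, hS, rfl⟩ := hA
    obtain ⟨T, hT, rfl⟩ := hB
    refine hinter S hS T hT ?_
    rw [Finset.disjoint_left]
    intro i hiS hiT
    have h1 : f i ∈ S.image f := Finset.mem_image_of_mem _ hiS
    have h2 : f i ∈ T.image f := Finset.mem_image_of_mem _ hiT
    exact (Finset.disjoint_left.1 hd) h1 h2
  set t := (k-1)/2 with ht
  have hcardfin : Fintype.card (Fin (k-1)) = 2 * t := by
    simp only [Fintype.card_fin]
    obtain ⟨u, hu⟩ := hko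
    omega
  have hmil := P2834Aux.milner_general (t := t) (by omega) hcardfin antiℬ interℬ
  have h2t : 2 * t = k - 1 := by
    obtain ⟨u, hu⟩ := hko
    omega
  have hsymm : (k-1).choose (t+1) = (k-1).choose ((k-3)/2) := by
    have h1 : (k-1) - (t+1) = (k-3)/2 := by omega
    rw [← h1, Nat.choose_symm (by omega)]
  rw [h2t, hsymm] at hmil
  omega

/-- for `k ≥ 2` even, `1^k` strictly maximizes `|·^{⊥B}|` among partitions
with `k` parts not all equal; for `k ≥ 5` odd, `2·1^{k-1}` maximizes `|·^{⊥B}|` among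
all partitions with `k` parts. -/
theorem stmt7 (k : ℕ) :
    (2 ≤ k → Even k → ∀ mu : Fin k → ℤ, IsPartition mu → (∃ i j, mu i ≠ mu j) →
      (perpB mu).card < (perpB (onesP k)).card) ∧
    (5 ≤ k → Odd k → ∀ mu : Fin k → ℤ, IsPartition mu →
      (perpB mu).card ≤ (perpB (twoOnesP k)).card) := by
  constructor
  · intro hk2 hke mu hmu hne
    have h1 := even_bound hk2 hke hmu hne
    have h2 := onesP_lower (k := k) hke
    omega
  · intro hk5 hko mu hmu
    have h1 := odd_bound hk5 hko hmu
    have h2 := twoOnesP_lower hk5 hko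
    omega

end P2834
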